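/- If j ≤ k ≤ k+1 ≤ n and x ∈ (j/(n-1), (j+1)/(n-1)), then 1 ≥ m_{k,n,j}(x) ≥ m_{k+1,n,j}(x); and if 0 ≤ k ≤ k+1 ≤ j then m_{k,n,j}(x) ≤ m_{k+1,n,j}(x) ≤ 1, where m_{k,n,j}(x) = b_{n,k}(x)/b_{n,j}(x) with b_{n,k}(x) = C(n+k-1,k) x^k (1+x)^{-(n+k)}. -/

import Mathlib

open Finset Set

/-- Basis functions of the truncated Baskakov operator on `[0,1]`:
`b_{n,k}(x) = C(n+k-1,k) x^k (1+x)^{-(n+k)}`. -/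
noncomputable def bk (n k : ℕ) (x : ℝ) : ℝ :=
  (Nat.choose (n + k - 1) k : ℝ) * x ^ k / (1 + x) ^ (n + k)

/-- Max-product truncated Baskakov operator on `[0,1]`. -/
noncomputable def UM (n : ℕ) (f : ℝ → ℝ) (x : ℝ) : ℝ :=
  ((range (n + 1)).sup' nonempty_range_add_one fun k => bk n k x * f ((k : ℝ) / n)) /
  ((range (n + 1)).sup' nonempty_range_add_one fun k => bk n k x)

/-- Basis functions on a general compact interval `[a,b]`. -/
noncomputable def bkab (a b : ℝ) (n k : ℕ) (x : ℝ) : ℝ :=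
  (Nat.choose (n + k - 1) k : ℝ) * ((x - a) / (b - a)) ^ k /
    ((b - 2 * a + x) / (b - a)) ^ (n + k)

/-- Max-product truncated Baskakov operator on `[a,b]`. -/
noncomputable def UMab (a b : ℝ) (n : ℕ) (f : ℝ → ℝ) (x : ℝ) : ℝ :=
  ((range (n + 1)).sup' nonempty_range_add_one fun k =>
      bkab a b n k x * f (a + (b - a) * k / n)) /
  ((range (n + 1)).sup' nonempty_range_add_one fun k => bkab a b n k x)

/-- Modulus of continuity `ω₁(f;δ)` of `f` on a set `s`. -/
noncomputable def omega1 (f : ℝ → ℝ) (s : Set ℝ) (δ : ℝ) : ℝ :=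
  sSup {d | ∃ x ∈ s, ∃ y ∈ s, |x - y| ≤ δ ∧ d = |f x - f y|}

lemma bk_pos (n k : ℕ) (hn : 1 ≤ n) (x : ℝ) (hx : 0 < x) : 0 < bk n k x := by
  unfold bk
  have h1 : 0 < (Nat.choose (n + k - 1) k : ℝ) := by
    have : k ≤ n + k - 1 := by omega
    exact_mod_cast Nat.choose_pos this
  positivity

lemma bk_choose_step (n k : ℕ) (hn : 1 ≤ n) :
    ((n + k).choose (k+1) : ℝ) * ((k:ℝ)+1) = ((n:ℝ)+k) * ((n+k-1).choose k) := by
  have h3 := Nat.add_one_mul_choose_eq (n + k - 1) k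
  have h2 : n + k - 1 + 1 = n + k := by omega
  rw [h2] at h3
  exact_mod_cast h3.symm

lemma bk_succ_le (n k : ℕ) (hn : 1 ≤ n) (x : ℝ) (hx : 0 < x)
    (h : x * ((n : ℝ) - 1) ≤ (k : ℝ) + 1) :
    bk n (k+1) x ≤ bk n k x := by
  unfold bk
  have h1 : n + (k+1) - 1 = n + k := by omega
  rw [h1]
  have hx1 : (0:ℝ) < 1 + x := by linarith
  rw [div_le_div_iff₀ (by positivity) (by positivity)]
  have hch := bk_choose_step n k hn
  have hC : (0:ℝ) ≤ ((n+k-1).choose k : ℝ) := by positivity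
  have key : ((n + k).choose (k+1) : ℝ) * x ≤ ((n+k-1).choose k : ℝ) * (1 + x) := by
    rw [← mul_le_mul_iff_of_pos_right (by positivity : (0:ℝ) < (k:ℝ)+1)]
    have he : ((n + k).choose (k+1) : ℝ) * x * ((k:ℝ)+1) =
        (((n + k).choose (k+1) : ℝ) * ((k:ℝ)+1)) * x := by ring
    rw [he, hch]
    nlinarith [hC, hx.le]
  calc ((n + k).choose (k+1) : ℝ) * x ^ (k+1) * (1+x)^(n+k)
      = (x ^ k * (1+x)^(n+k)) * (((n + k).choose (k+1) : ℝ) * x) := by ring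
    _ ≤ (x ^ k * (1+x)^(n+k)) * (((n+k-1).choose k : ℝ) * (1+x)) := by
        apply mul_le_mul_of_nonneg_left key (by positivity)
    _ = ((n+k-1).choose k : ℝ) * x ^ k * (1+x)^(n+(k+1)) := by ring

lemma bk_le_succ (n k : ℕ) (hn : 1 ≤ n) (x : ℝ) (hx : 0 < x)
    (h : (k : ℝ) + 1 ≤ x * ((n : ℝ) - 1)) :
    bk n k x ≤ bk n (k+1) x := by
  unfold bk
  have h1 : n + (k+1) - 1 = n + k := by omega
  rw [h1]
  have hx1 : (0:ℝ) < 1 + x := by linarith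
  rw [div_le_div_iff₀ (by positivity) (by positivity)]
  have hch := bk_choose_step n k hn
  have hC : (0:ℝ) ≤ ((n+k-1).choose k : ℝ) := by positivity
  have key : ((n+k-1).choose k : ℝ) * (1 + x) ≤ ((n + k).choose (k+1) : ℝ) * x := by
    rw [← mul_le_mul_iff_of_pos_right (by positivity : (0:ℝ) < (k:ℝ)+1)]
    have he : ((n + k).choose (k+1) : ℝ) * x * ((k:ℝ)+1) =
        (((n + k).choose (k+1) : ℝ) * ((k:ℝ)+1)) * x := by ring
    rw [he, hch]
    nlinarith [hC, hx.le]
  calc ((n+k-1).choose k : ℝ) * x ^ k * (1+x)^(n+(k+1))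
      = (x ^ k * (1+x)^(n+k)) * (((n+k-1).choose k : ℝ) * (1+x)) := by ring
    _ ≤ (x ^ k * (1+x)^(n+k)) * (((n + k).choose (k+1) : ℝ) * x) := by
        apply mul_le_mul_of_nonneg_left key (by positivity)
    _ = ((n + k).choose (k+1) : ℝ) * x ^ (k+1) * (1+x)^(n+k) := by ring

theorem m_knj_monotonicity (n : ℕ) (hn : 2 ≤ n) (j : ℕ) (hj : j ≤ n - 2)
    (x : ℝ) (hx : x ∈ Set.Ioo ((j : ℝ) / ((n : ℝ) - 1)) (((j : ℝ) + 1) / ((n : ℝ) - 1)))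
    (k : ℕ) :
    (j ≤ k → k + 1 ≤ n →
      bk n k x / bk n j x ≤ 1 ∧ bk n (k + 1) x / bk n j x ≤ bk n k x / bk n j x) ∧
    (k + 1 ≤ j →
      bk n k x / bk n j x ≤ bk n (k + 1) x / bk n j x ∧ bk n (k + 1) x / bk n j x ≤ 1) := by
  have hn1 : 1 ≤ n := by omega
  have hnpos : (0:ℝ) < (n:ℝ) - 1 := by
    have : (2:ℝ) ≤ (n:ℝ) := by exact_mod_cast hn
    linarith
  obtain ⟨hxl, hxr⟩ := hx
  have hx0 : 0 < x := by
    have : (0:ℝ) ≤ (j:ℝ) / ((n:ℝ) - 1) := by positivity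
    linarith
  have hxu : x * ((n:ℝ) - 1) < (j:ℝ) + 1 := by
    have := (lt_div_iff₀ hnpos).mp hxr
    linarith
  have hxd : (j:ℝ) < x * ((n:ℝ) - 1) := by
    have := (div_lt_iff₀ hnpos).mp hxl
    linarith
  have hbj : 0 < bk n j x := bk_pos n j hn1 x hx0
  -- decreasing above j
  have dec : ∀ d, bk n (j + d) x ≤ bk n j x := by
    intro d
    induction d with
    | zero => simp
    | succ d ih =>
        have step : bk n (j + d + 1) x ≤ bk n (j + d) x := by
          apply bk_succ_le n (j + d) hn1 x hx0
          have : (j:ℝ) + 1 ≤ (↑(j + d) : ℝ) + 1 := by push_cast; linarith [Nat.cast_nonneg (α := ℝ) d]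
          linarith
        have he : j + (d + 1) = j + d + 1 := by omega
        rw [he]
        exact step.trans ih
  -- increasing below j
  have inc : ∀ d i, i + d = j → bk n i x ≤ bk n j x := by
    intro d
    induction d with
    | zero => intro i h; have : i = j := by omega
              rw [this]
    | succ d ih =>
        intro i h
        have step : bk n i x ≤ bk n (i + 1) x := by
          apply bk_le_succ n i hn1 x hx0
          have : ((i:ℝ) + 1) ≤ (j:ℝ) := by exact_mod_cast (by omega : i + 1 ≤ j)
          linarith
        exact step.trans (ih (i + 1) (by omega))
  constructor
  · intro hjk _
    constructor
    · rw [div_le_one hbj]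
      obtain ⟨d, rfl⟩ := Nat.exists_eq_add_of_le hjk
      exact dec d
    · apply div_le_div_of_nonneg_right ?_ hbj.le
      apply bk_succ_le n k hn1 x hx0
      have : (j:ℝ) ≤ (k:ℝ) := by exact_mod_cast hjk
      linarith
  · intro hkj
    have hstep : bk n k x ≤ bk n (k + 1) x := by
      apply bk_le_succ n k hn1 x hx0
      have : ((k:ℝ) + 1) ≤ (j:ℝ) := by exact_mod_cast hkj
      linarith
    constructor
    · exact div_le_div_of_nonneg_right hstep hbj.le
    · rw [div_le_one hbj]
      obtain ⟨d, hd⟩ := Nat.exists_eq_add_of_le hkj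
      exact inc (j - (k+1)) (k+1) (by omega)
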